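/- Let G be a finite graph, let 𝒦 be a family of vertex subsets each of size f and each with boundary of size b, and suppose every vertex lies in exactly M members of 𝒦. Select each K ∈ 𝒦 independently with probability p, let D₁ be the union of the boundaries of selected sets, and let D₂ be the set of edges both of whose endpoints lie in no selected set. If G is d-regular (so |E| = d|N| as ordered pairs), then E[|D₁|] ≤ p·(M/(d·f))·b·|E| and E[|D₂|] ≤ (1−p)^M·|E|. -/

import Mathlib

open Finset

lemma key_factor {ι : Type} [Fintype ι] [DecidableEq ι] (p : ℝ) (e : ι → Bool → ℝ) :
    ∑ σ : ι → Bool, (∏ i, if σ i then p else 1 - p) * ∏ i, e i (σ i)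
      = ∏ i, (p * e i true + (1 - p) * e i false) := by
  have h2 : ∀ i : ι, p * e i true + (1 - p) * e i false
      = ∑ b : Bool, (if b then p else 1 - p) * e i b := by
    intro i; simp
  simp_rw [h2, ← Finset.prod_mul_distrib]
  rw [Finset.prod_univ_sum, Fintype.piFinset_univ]

lemma prob_true {ι : Type} [Fintype ι] [DecidableEq ι] (p : ℝ) (i₀ : ι) :
    ∑ σ : ι → Bool, (∏ i, if σ i then p else 1 - p) * (if σ i₀ then (1:ℝ) else 0) = p := by
  have h := key_factor p (fun i b => if i = i₀ then (if b then (1:ℝ) else 0) else 1)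
  have hin : ∀ σ : ι → Bool,
      (∏ i, if i = i₀ then (if σ i then (1:ℝ) else 0) else 1) = (if σ i₀ then 1 else 0) := by
    intro σ
    rw [Finset.prod_ite_eq' Finset.univ i₀ (fun i => if σ i then (1:ℝ) else 0)]
    simp
  simp_rw [hin] at h
  rw [h]
  have h1 : (∏ i : ι, if i = i₀ then p else (1:ℝ)) = p := by
    rw [Finset.prod_ite_eq' Finset.univ i₀ (fun _ => p)]; simp
  rw [← h1]
  exact Finset.prod_congr rfl fun i _ => by by_cases hi : i = i₀ <;> simp [hi]

lemma prob_false {ι : Type} [Fintype ι] [DecidableEq ι] (p : ℝ) (A : Finset ι) :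
    ∑ σ : ι → Bool, (∏ i, if σ i then p else 1 - p) *
      (if ∀ i ∈ A, σ i = false then (1:ℝ) else 0) = (1 - p) ^ A.card := by
  have h := key_factor p (fun i b => if i ∈ A then (if b then (0:ℝ) else 1) else 1)
  have hin : ∀ σ : ι → Bool,
      (∏ i, if i ∈ A then (if σ i then (0:ℝ) else 1) else 1)
      = (if ∀ i ∈ A, σ i = false then 1 else 0) := by
    intro σ
    rw [Finset.prod_ite_mem Finset.univ A (fun i => if σ i then (0:ℝ) else 1), Finset.univ_inter]
    rw [show (∏ i ∈ A, (if σ i then (0:ℝ) else 1)) = ∏ i ∈ A, (if σ i = false then (1:ℝ) else 0)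
      from Finset.prod_congr rfl (by intro i _; cases hσ : σ i <;> simp)]
    rw [Finset.prod_boole]; simp
  simp_rw [hin] at h
  rw [h]
  have h1 : (∏ i : ι, if i ∈ A then 1 - p else (1:ℝ)) = (1 - p) ^ A.card := by
    rw [Finset.prod_ite_mem Finset.univ A (fun _ => 1 - p), Finset.univ_inter, Finset.prod_const]
  rw [← h1]
  exact Finset.prod_congr rfl fun i _ => by by_cases hi : i ∈ A <;> simp [hi]

/-- Ordered neighbor pairs of `G`. -/
def oEdges {V : Type} [Fintype V] (G : SimpleGraph V) [DecidableRel G.Adj] :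
    Finset (V × V) :=
  Finset.univ.filter (fun p => G.Adj p.1 p.2)

/-- The boundary `∂F` of a vertex set, as ordered pairs from `F` to its complement. -/
def bdry {V : Type} [Fintype V] [DecidableEq V] (G : SimpleGraph V)
    [DecidableRel G.Adj] (F : Finset V) : Finset (V × V) :=
  (oEdges G).filter (fun p => p.1 ∈ F ∧ p.2 ∉ F)

/-- Let `𝒦` be a family of vertex subsets of a `d`-regular finite graph,
each of size `f` and each with boundary of size `b`, such that every vertex lies in
exactly `M` members of `𝒦`. Select each `K ∈ 𝒦` independently with probability `p`
(the expectation is written as a sum over selections `σ` weighted by the product Bernoulli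
weights). Then the expected number of boundary edges of selected sets is at most
`p·(M/(d·f))·b·|E|`, and the expected number of edges with both endpoints in no selected
set is at most `(1−p)^M·|E|`. -/
theorem stmt16 {V : Type} [Fintype V] [DecidableEq V]
    (G : SimpleGraph V) [DecidableRel G.Adj] (d : ℕ) (hd : 0 < d)
    (hreg : ∀ v : V, G.degree v = d)
    (𝒦 : Finset (Finset V)) (f b M : ℕ) (hf : 0 < f) (hM : 0 < M)
    (hsize : ∀ K ∈ 𝒦, K.card = f) (hbdry : ∀ K ∈ 𝒦, (bdry G K).card = b)
    (hcover : ∀ v : V, (𝒦.filter (fun K => v ∈ K)).card = M)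
    (p : ℝ) (hp0 : 0 ≤ p) (hp1 : p ≤ 1) :
    (∑ σ : {K // K ∈ 𝒦} → Bool,
        (∏ K : {K // K ∈ 𝒦}, if σ K then p else 1 - p) *
          (((oEdges G).filter (fun e =>
              ∃ K : {K // K ∈ 𝒦}, σ K = true ∧ e ∈ bdry G K.1)).card : ℝ)
        ≤ p * ((M : ℝ) / ((d : ℝ) * (f : ℝ))) * (b : ℝ) * ((oEdges G).card : ℝ))
    ∧
    (∑ σ : {K // K ∈ 𝒦} → Bool,
        (∏ K : {K // K ∈ 𝒦}, if σ K then p else 1 - p) *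
          (((oEdges G).filter (fun e =>
              (∀ K : {K // K ∈ 𝒦}, σ K = true → e.1 ∉ K.1) ∧
              (∀ K : {K // K ∈ 𝒦}, σ K = true → e.2 ∉ K.1))).card : ℝ)
        ≤ (1 - p) ^ M * ((oEdges G).card : ℝ)) := by
  have hw : ∀ σ : {K // K ∈ 𝒦} → Bool,
      (0:ℝ) ≤ ∏ K : {K // K ∈ 𝒦}, if σ K then p else 1 - p :=
    fun σ => Finset.prod_nonneg fun i _ => by split <;> linarith
  -- double counting: |𝒦| * f = M * |V|
  have hKf : 𝒦.card * f = M * Fintype.card V := by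
    have h1 : ∑ K ∈ 𝒦, K.card = 𝒦.card * f := by
      rw [Finset.sum_congr rfl hsize, Finset.sum_const, smul_eq_mul]
    have h2 : ∑ K ∈ 𝒦, K.card = ∑ v : V, (𝒦.filter (fun K => v ∈ K)).card := by
      have hK : ∀ K : Finset V, K.card = ∑ v : V, if v ∈ K then 1 else 0 := by
        intro K
        rw [← Finset.card_filter]
        congr 1
        ext v; simp
      rw [Finset.sum_congr rfl fun K _ => hK K, Finset.sum_comm]
      exact Finset.sum_congr rfl fun v _ => (Finset.card_filter _ _).symm
    rw [← h1, h2, Finset.sum_congr rfl fun v _ => hcover v, Finset.sum_const, smul_eq_mul,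
      Finset.card_univ, mul_comm]
  -- |oEdges| = d * |V|
  have hE : (oEdges G).card = d * Fintype.card V := by
    have h1 : (oEdges G).card = ∑ a : V, (Finset.univ.filter (fun b => G.Adj a b)).card := by
      rw [oEdges, Finset.card_filter, Fintype.sum_prod_type]
      exact Finset.sum_congr rfl fun a _ => (Finset.card_filter _ _).symm
    have h2 : ∀ a : V, (Finset.univ.filter (fun b => G.Adj a b)).card = d := by
      intro a
      have : Finset.univ.filter (fun b => G.Adj a b) = G.neighborFinset a := by
        ext x; simp [SimpleGraph.mem_neighborFinset]
      rw [this, ← SimpleGraph.degree, hreg a]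
    rw [h1, Finset.sum_congr rfl fun a _ => h2 a, Finset.sum_const, smul_eq_mul,
      Finset.card_univ, mul_comm]
  -- each vertex is in exactly M members (subtype version)
  have hA : ∀ v : V,
      (Finset.univ.filter (fun K : {K // K ∈ 𝒦} => v ∈ K.1)).card = M := by
    intro v
    rw [← hcover v]
    apply Finset.card_bij (fun (K : {K // K ∈ 𝒦}) _ => K.1)
    · intro K hK; simp only [Finset.mem_filter, Finset.mem_univ, true_and] at hK
      exact Finset.mem_filter.mpr ⟨K.2, hK⟩
    · intro K1 _ K2 _ h; exact Subtype.ext h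
    · intro K hK
      rw [Finset.mem_filter] at hK
      exact ⟨⟨K, hK.1⟩, by simp [hK.2], rfl⟩
  constructor
  · -- Part 1
    have hKcount : ∀ σ : {K // K ∈ 𝒦} → Bool,
        (((oEdges G).filter (fun e =>
            ∃ K : {K // K ∈ 𝒦}, σ K = true ∧ e ∈ bdry G K.1)).card : ℝ)
        ≤ ∑ K : {K // K ∈ 𝒦}, (if σ K then (b:ℝ) else 0) := by
      intro σ
      have hsubset : ((oEdges G).filter (fun e =>
            ∃ K : {K // K ∈ 𝒦}, σ K = true ∧ e ∈ bdry G K.1))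
          ⊆ (Finset.univ.filter (fun K : {K // K ∈ 𝒦} => σ K = true)).biUnion
              (fun K => bdry G K.1) := by
        intro e he
        rw [Finset.mem_filter] at he
        obtain ⟨_, K, hK1, hK2⟩ := he
        exact Finset.mem_biUnion.mpr ⟨K, by simp [hK1], hK2⟩
      calc (((oEdges G).filter (fun e =>
            ∃ K : {K // K ∈ 𝒦}, σ K = true ∧ e ∈ bdry G K.1)).card : ℝ)
          ≤ (((Finset.univ.filter (fun K : {K // K ∈ 𝒦} => σ K = true)).biUnion
              (fun K => bdry G K.1)).card : ℝ) := by
            exact_mod_cast Finset.card_le_card hsubset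
        _ ≤ ((∑ K ∈ Finset.univ.filter (fun K : {K // K ∈ 𝒦} => σ K = true),
              (bdry G K.1).card : ℕ) : ℝ) := by exact_mod_cast Finset.card_biUnion_le
        _ = ∑ K ∈ Finset.univ.filter (fun K : {K // K ∈ 𝒦} => σ K = true), (b:ℝ) := by
            push_cast
            exact Finset.sum_congr rfl fun K _ => by rw [hbdry K.1 K.2]
        _ = ∑ K : {K // K ∈ 𝒦}, (if σ K then (b:ℝ) else 0) := by
            rw [Finset.sum_filter]
    have step : ∑ σ : {K // K ∈ 𝒦} → Bool,
        (∏ K : {K // K ∈ 𝒦}, if σ K then p else 1 - p) *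
          (((oEdges G).filter (fun e =>
              ∃ K : {K // K ∈ 𝒦}, σ K = true ∧ e ∈ bdry G K.1)).card : ℝ)
        ≤ (𝒦.card : ℝ) * (b * p) := by
      calc _ ≤ ∑ σ : {K // K ∈ 𝒦} → Bool,
            (∏ K : {K // K ∈ 𝒦}, if σ K then p else 1 - p) *
              ∑ K : {K // K ∈ 𝒦}, (if σ K then (b:ℝ) else 0) :=
          Finset.sum_le_sum fun σ _ => mul_le_mul_of_nonneg_left (hKcount σ) (hw σ)
        _ = ∑ K : {K // K ∈ 𝒦}, ∑ σ : {K // K ∈ 𝒦} → Bool,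
            (∏ K : {K // K ∈ 𝒦}, if σ K then p else 1 - p) * (if σ K then (b:ℝ) else 0) := by
          simp_rw [Finset.mul_sum]
          rw [Finset.sum_comm]
        _ = ∑ K : {K // K ∈ 𝒦}, (b * p : ℝ) := by
          refine Finset.sum_congr rfl fun K _ => ?_
          calc ∑ σ : {K // K ∈ 𝒦} → Bool,
              (∏ K : {K // K ∈ 𝒦}, if σ K then p else 1 - p) * (if σ K then (b:ℝ) else 0)
              = ∑ σ : {K // K ∈ 𝒦} → Bool,
              (b:ℝ) * ((∏ K : {K // K ∈ 𝒦}, if σ K then p else 1 - p) *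
                (if σ K then (1:ℝ) else 0)) := by
                refine Finset.sum_congr rfl fun σ _ => ?_
                split <;> ring
            _ = b * p := by rw [← Finset.mul_sum, prob_true p K]
        _ = (𝒦.card : ℝ) * (b * p) := by
          rw [Finset.sum_const, Finset.card_univ, Fintype.card_coe, nsmul_eq_mul]
    refine le_trans step (le_of_eq ?_)
    have hKf' : (𝒦.card : ℝ) * f = M * Fintype.card V := by exact_mod_cast hKf
    have hE' : ((oEdges G).card : ℝ) = d * Fintype.card V := by exact_mod_cast hE
    have hd' : (d:ℝ) ≠ 0 := Nat.cast_ne_zero.mpr hd.ne'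
    have hf' : (f:ℝ) ≠ 0 := Nat.cast_ne_zero.mpr hf.ne'
    rw [hE']
    field_simp
    linear_combination ((b:ℝ) * p) * hKf'
  · -- Part 2
    have hcard : ∀ σ : {K // K ∈ 𝒦} → Bool,
        (((oEdges G).filter (fun e =>
            (∀ K : {K // K ∈ 𝒦}, σ K = true → e.1 ∉ K.1) ∧
            (∀ K : {K // K ∈ 𝒦}, σ K = true → e.2 ∉ K.1))).card : ℝ)
        = ∑ e ∈ oEdges G, (if (∀ K : {K // K ∈ 𝒦}, σ K = true → e.1 ∉ K.1) ∧
            (∀ K : {K // K ∈ 𝒦}, σ K = true → e.2 ∉ K.1) then (1:ℝ) else 0) := by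
      intro σ
      rw [Finset.card_filter]
      push_cast
      rfl
    calc ∑ σ : {K // K ∈ 𝒦} → Bool,
        (∏ K : {K // K ∈ 𝒦}, if σ K then p else 1 - p) *
          (((oEdges G).filter (fun e =>
              (∀ K : {K // K ∈ 𝒦}, σ K = true → e.1 ∉ K.1) ∧
              (∀ K : {K // K ∈ 𝒦}, σ K = true → e.2 ∉ K.1))).card : ℝ)
        = ∑ e ∈ oEdges G, ∑ σ : {K // K ∈ 𝒦} → Bool,
            (∏ K : {K // K ∈ 𝒦}, if σ K then p else 1 - p) *
              (if (∀ K : {K // K ∈ 𝒦}, σ K = true → e.1 ∉ K.1) ∧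
                  (∀ K : {K // K ∈ 𝒦}, σ K = true → e.2 ∉ K.1) then (1:ℝ) else 0) := by
          simp_rw [hcard, Finset.mul_sum]
          rw [Finset.sum_comm]
      _ ≤ ∑ e ∈ oEdges G, ((1 - p) ^ M : ℝ) := by
          refine Finset.sum_le_sum fun e he => ?_
          calc ∑ σ : {K // K ∈ 𝒦} → Bool,
              (∏ K : {K // K ∈ 𝒦}, if σ K then p else 1 - p) *
                (if (∀ K : {K // K ∈ 𝒦}, σ K = true → e.1 ∉ K.1) ∧
                    (∀ K : {K // K ∈ 𝒦}, σ K = true → e.2 ∉ K.1) then (1:ℝ) else 0)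
              ≤ ∑ σ : {K // K ∈ 𝒦} → Bool,
              (∏ K : {K // K ∈ 𝒦}, if σ K then p else 1 - p) *
                (if ∀ K ∈ Finset.univ.filter (fun K : {K // K ∈ 𝒦} => e.1 ∈ K.1),
                    σ K = false then (1:ℝ) else 0) := by
                refine Finset.sum_le_sum fun σ _ => mul_le_mul_of_nonneg_left ?_ (hw σ)
                split_ifs with h1 h2
                · exact le_refl 1
                · exfalso
                  apply h2
                  intro K hK
                  rw [Finset.mem_filter] at hK
                  cases hσ : σ K with
                  | false => rfl
                  | true => exact absurd hK.2 (h1.1 K hσ)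
                · norm_num
                · exact le_refl 0
            _ = (1 - p) ^ (Finset.univ.filter (fun K : {K // K ∈ 𝒦} => e.1 ∈ K.1)).card :=
                prob_false p _
            _ = (1 - p) ^ M := by rw [hA e.1]
      _ = (1 - p) ^ M * ((oEdges G).card : ℝ) := by
          rw [Finset.sum_const, nsmul_eq_mul, mul_comm]
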